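/- Let M = (Q, Σ, δ, q0, F) be a total DFA and let ≃ ⊆ Q × Q be a congruence on M, i.e. an equivalence relation such that q1 ≃ q2 implies δ(q1, a) ≃ δ(q2, a) for all a ∈ Σ. Then there exists a DFA N = (P, Δ, μ, q0, F') with Q ⊆ P and Σ ⊆ Δ such that: (1) L_M(q) = L_N(q) ∩ Σ* and δ^{-1}(q) = μ^{-1}(q) for every q ∈ Q; (2) L_M(q1) △ L_M(q2) = L_N(q1) △ L_N(q2) for all q1 ≃ q2; (3) for every p1 ∈ P \ Q and every p2 ∈ P with p1 ≠ p2, the set L_N(p1) △ L_N(p2) is infinite; and (4) for all q1, q2 ∈ Q with q1 ≄ q2, the set L_N(q1) △ L_N(q2) is infinite. -/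

import Mathlib

/-- The distance `d(L, L')` between two languages: the least `ℓ ∈ ℕ` such that
`L` and `L'` agree on all words of length at least `ℓ` (with `min ∅ = ∞`). -/
noncomputable def langDist {α : Type} (L L' : Set (List α)) : ℕ∞ :=
  sInf {n : ℕ∞ | ∃ ℓ : ℕ, n = (ℓ : ℕ∞) ∧
    ∀ w : List α, ℓ ≤ w.length → (w ∈ L ↔ w ∈ L')}

/-- A deterministic finite automaton with a partial transition function. -/
structure PDFA (α σ : Type) where
  step : σ → α → Option σ
  start : σ
  accept : Set σ

namespace PDFA

variable {α σ : Type}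

/-- Running the partial DFA from state `q` on the word `w`. -/
def evalFrom (M : PDFA α σ) (q : σ) (w : List α) : Option σ :=
  w.foldl (fun o a => o.bind fun r => M.step r a) (some q)

/-- Running the partial DFA from the start state. -/
def eval (M : PDFA α σ) (w : List α) : Option σ :=
  M.evalFrom M.start w

/-- The right-language `L_M(q)` of the state `q`. -/
def rightLang (M : PDFA α σ) (q : σ) : Set (List α) :=
  {w | ∃ p ∈ M.accept, M.evalFrom q w = some p}

/-- The language recognised by the partial DFA. -/
def accepts (M : PDFA α σ) : Set (List α) :=
  {w | ∃ p ∈ M.accept, M.eval w = some p}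

/-- The left-language `δ⁻¹(q)` of the state `q`: all words leading to `q`. -/
def leftLang (M : PDFA α σ) (q : σ) : Set (List α) :=
  {w | M.eval w = some q}

/-- `in-level_M(q)`: the supremum of the lengths of words leading to `q`. -/
noncomputable def inLevel (M : PDFA α σ) (q : σ) : ℕ∞ :=
  ⨆ w ∈ M.leftLang q, (w.length : ℕ∞)

/-- A DFA is minimal if all states are reachable and have pairwise
distinct right-languages. -/
def IsMinimal (M : PDFA α σ) : Prop :=
  (∀ q : σ, ∃ w : List α, M.eval w = some q) ∧
  ∀ q p : σ, M.rightLang q = M.rightLang p → q = p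

end PDFA

/-- The distance between a state of `M` and a state of `N`. -/
noncomputable def stateDist {α σ τ : Type} (M : PDFA α σ) (N : PDFA α τ)
    (q : σ) (p : τ) : ℕ∞ :=
  langDist (M.rightLang q) (N.rightLang p)

/-- Two states `q` of `M` and `p` of `N` are `k`-similar if
`d(q, p) + min(k, in-level_M(q), in-level_N(p)) ≤ k`. -/
def kSimSt {α σ τ : Type} (M : PDFA α σ) (N : PDFA α τ) (k : ℕ) (q : σ) (p : τ) : Prop :=
  stateDist M N q p + min (k : ℕ∞) (min (M.inLevel q) (N.inLevel p)) ≤ (k : ℕ∞)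

/-- Two DFAs are `k`-similar if their languages differ only on words of length `< k`. -/
def kSimDFA {α σ τ : Type} (M : PDFA α σ) (N : PDFA α τ) (k : ℕ) : Prop :=
  ∀ w ∈ symmDiff M.accepts N.accepts, w.length < k

/-- The right-language of a state of a total DFA. -/
def DFA.rightLang {α σ : Type} (M : DFA α σ) (q : σ) : Set (List α) :=
  {w | M.evalFrom q w ∈ M.accept}


section CongruenceGadgetAux

open Sum

variable {α σ : Type}

private lemma gfoldl_none {γ δ : Type} (N : PDFA γ δ) (w : List γ) :
    w.foldl (fun o a => o.bind fun s => N.step s a) (none : Option δ) = none := by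
  induction w with
  | nil => rfl
  | cons a w ih => simpa using ih

private lemma gevalFrom_cons {γ δ : Type} (N : PDFA γ δ) (q : δ) (a : γ) (w : List γ) :
    N.evalFrom q (a :: w) = Option.elim (N.step q a) none (fun p => N.evalFrom p w) := by
  have h : N.evalFrom q (a :: w)
      = w.foldl (fun o x => o.bind fun s => N.step s x) (N.step q a) := by
    simp [PDFA.evalFrom]
  rw [h]
  cases h' : N.step q a with
  | none => simp [gfoldl_none]
  | some p => simp [PDFA.evalFrom]

private lemma gevalFrom_cons_some {γ δ : Type} (N : PDFA γ δ) {q p : δ} {a : γ}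
    (h : N.step q a = some p) (w : List γ) :
    N.evalFrom q (a :: w) = N.evalFrom p w := by
  rw [gevalFrom_cons, h]; rfl

private lemma gevalFrom_cons_none {γ δ : Type} (N : PDFA γ δ) {q : δ} {a : γ}
    (h : N.step q a = none) (w : List γ) :
    N.evalFrom q (a :: w) = none := by
  rw [gevalFrom_cons, h]; rfl

private lemma gevalFrom_append_some {γ δ : Type} (N : PDFA γ δ) {q p : δ} {u : List γ}
    (h : N.evalFrom q u = some p) (v : List γ) :
    N.evalFrom q (u ++ v) = N.evalFrom p v := by
  unfold PDFA.evalFrom at *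
  rw [List.foldl_append, h]

private lemma gmem_rightLang_iff {γ δ : Type} (N : PDFA γ δ) {q p : δ} {w : List γ}
    (h : N.evalFrom q w = some p) :
    w ∈ N.rightLang q ↔ p ∈ N.accept := by
  simp only [PDFA.rightLang, Set.mem_setOf_eq, h, Option.some.injEq]
  constructor
  · rintro ⟨p', hp', rfl⟩; exact hp'
  · exact fun hp => ⟨p, hp, rfl⟩

private lemma gnot_mem_rightLang {γ δ : Type} (N : PDFA γ δ) {q : δ} {w : List γ}
    (h : N.evalFrom q w = none) : w ∉ N.rightLang q := by
  simp [PDFA.rightLang, h]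

private lemma gpure_decomp {β : Type} :
    ∀ (w : List (α ⊕ β)), (∀ x ∈ w, ∃ a : α, x = inl a) → ∃ u : List α, w = u.map inl := by
  intro w
  induction w with
  | nil => exact fun _ => ⟨[], rfl⟩
  | cons x w ih =>
    intro h
    obtain ⟨a, rfl⟩ := h x List.mem_cons_self
    obtain ⟨u, rfl⟩ := ih (fun y hy => h y (List.mem_cons_of_mem _ hy))
    exact ⟨a :: u, rfl⟩

variable (M : DFA α σ) (r : σ → σ → Prop)

open Classical in
/-- The gadget automaton. New letters: `inr none` (a loop letter `c`) and
`inr (some s)` for each state `s`. New states: `inr none` (an accepting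
`c`-loop) and `inr (some s)` for each `s`. -/
noncomputable def cgadget : PDFA (α ⊕ Option σ) (σ ⊕ Option σ) where
  step
    | inl q, inl a => some (inl (M.step q a))
    | inl _, inr none => none
    | inl q, inr (some s) => if r q s then some (inr none) else none
    | inr none, inr none => some (inr none)
    | inr none, inr (some _) => none
    | inr none, inl _ => none
    | inr (some t), inr none => some (inr (some t))
    | inr (some t), inr (some s) => if s = t then some (inr none) else none
    | inr (some _), inl _ => none
  start := inl M.start
  accept := (inl '' M.accept) ∪ {inr none}

open Classical in
private lemma cstep_inl_b (q s : σ) :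
    (cgadget M r).step (inl q) (inr (some s)) = if r q s then some (inr none) else none := rfl

open Classical in
private lemma cstep_t_b (t s : σ) :
    (cgadget M r).step (inr (some t)) (inr (some s))
      = if s = t then some (inr none) else none := rfl

private lemma cinl_mem_accept {p : σ} : inl p ∈ (cgadget M r).accept ↔ p ∈ M.accept := by
  simp [cgadget]

private lemma cinr_none_mem_accept : (inr none : σ ⊕ Option σ) ∈ (cgadget M r).accept := by
  simp [cgadget]

private lemma cinr_some_not_mem_accept (t : σ) :
    (inr (some t) : σ ⊕ Option σ) ∉ (cgadget M r).accept := by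
  simp [cgadget]

private lemma ceval_pure (q : σ) (u : List α) :
    (cgadget M r).evalFrom (inl q) (u.map inl) = some (inl (M.evalFrom q u)) := by
  induction u generalizing q with
  | nil => rfl
  | cons a u ih =>
    rw [List.map_cons, gevalFrom_cons_some _ (show (cgadget M r).step (inl q) (inl a)
      = some (inl (M.step q a)) from rfl), ih]
    rfl

private lemma ceval_cnone (m : ℕ) :
    (cgadget M r).evalFrom (inr none) (List.replicate m (inr none)) = some (inr none) := by
  induction m with
  | zero => rfl
  | succ m ih =>
    rw [List.replicate_succ, gevalFrom_cons_some _ (show (cgadget M r).step (inr none)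
      (inr none) = some (inr none) from rfl)]
    exact ih

private lemma ceval_csome (t : σ) (m : ℕ) :
    (cgadget M r).evalFrom (inr (some t)) (List.replicate m (inr none))
      = some (inr (some t)) := by
  induction m with
  | zero => rfl
  | succ m ih =>
    rw [List.replicate_succ, gevalFrom_cons_some _ (show (cgadget M r).step (inr (some t))
      (inr none) = some (inr (some t)) from rfl)]
    exact ih

private lemma cstep_inr_ne_inl (t : Option σ) (x : α ⊕ Option σ) (q : σ) :
    (cgadget M r).step (inr t) x ≠ some (inl q) := by
  rcases t with _ | t <;> rcases x with a | (_ | s) <;>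
    simp only [cgadget, cstep_t_b] <;> simp only [ne_eq] <;>
    (try split_ifs) <;> simp

private lemma ceval_inr_ne_inl :
    ∀ (w : List (α ⊕ Option σ)) (t : Option σ) (q : σ),
      (cgadget M r).evalFrom (inr t) w ≠ some (inl q) := by
  intro w
  induction w with
  | nil => intro t q h; exact Sum.inl_ne_inr (Option.some.inj (h : some (inr t) = some (inl q))).symm
  | cons x w ih =>
    intro t q h
    cases hs : (cgadget M r).step (inr t) x with
    | none => rw [gevalFrom_cons_none _ hs] at h; exact absurd h (by simp)
    | some p =>
      rw [gevalFrom_cons_some _ hs] at h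
      rcases p with q' | t'
      · exact cstep_inr_ne_inl M r t x q' hs
      · exact ih t' q h

private lemma ceval_inl_pure :
    ∀ {w : List (α ⊕ Option σ)} {p q : σ},
      (cgadget M r).evalFrom (inl p) w = some (inl q) →
      ∃ u : List α, w = u.map inl ∧ M.evalFrom p u = q := by
  intro w
  induction w with
  | nil =>
    intro p q h
    exact ⟨[], rfl, Sum.inl.inj (Option.some.inj h)⟩
  | cons x w ih =>
    intro p q h
    rcases x with a | (_ | s)
    · rw [gevalFrom_cons_some _ (show (cgadget M r).step (inl p) (inl a)
        = some (inl (M.step p a)) from rfl)] at h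
      obtain ⟨u, rfl, hu⟩ := ih h
      exact ⟨a :: u, rfl, hu⟩
    · rw [gevalFrom_cons_none _ (show (cgadget M r).step (inl p) (inr none)
        = none from rfl)] at h
      exact absurd h (by simp)
    · by_cases hrs : r p s
      · rw [gevalFrom_cons_some _ (by rw [cstep_inl_b]; exact if_pos hrs)] at h
        exact absurd h (ceval_inr_ne_inl M r w none q)
      · rw [gevalFrom_cons_none _ (by rw [cstep_inl_b]; exact if_neg hrs)] at h
        exact absurd h (by simp)

private lemma cevalFrom_rel (hequiv : Equivalence r)
    (hcong : ∀ (q1 q2 : σ) (a : α), r q1 q2 → r (M.step q1 a) (M.step q2 a)) :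
    ∀ (w : List (α ⊕ Option σ)) (q1 q2 : σ), r q1 q2 →
      (¬ ∀ x ∈ w, ∃ a : α, x = inl a) →
      (cgadget M r).evalFrom (inl q1) w = (cgadget M r).evalFrom (inl q2) w := by
  intro w
  induction w with
  | nil => intro q1 q2 _ h; exact absurd (by simp) h
  | cons x w ih =>
    intro q1 q2 hr h
    rcases x with a | (_ | s)
    · rw [gevalFrom_cons_some _ (show (cgadget M r).step (inl q1) (inl a)
        = some (inl (M.step q1 a)) from rfl),
        gevalFrom_cons_some _ (show (cgadget M r).step (inl q2) (inl a)
        = some (inl (M.step q2 a)) from rfl)]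
      apply ih _ _ (hcong _ _ _ hr)
      intro hw
      apply h
      intro x hx
      rcases List.mem_cons.mp hx with rfl | hx
      · exact ⟨a, rfl⟩
      · exact hw x hx
    · rw [gevalFrom_cons_none _ (show (cgadget M r).step (inl q1) (inr none)
        = none from rfl),
        gevalFrom_cons_none _ (show (cgadget M r).step (inl q2) (inr none)
        = none from rfl)]
    · by_cases hrs : r q1 s
      · have hrs2 : r q2 s := hequiv.trans (hequiv.symm hr) hrs
        rw [gevalFrom_cons_some _ (by rw [cstep_inl_b]; exact if_pos hrs),
            gevalFrom_cons_some _ (by rw [cstep_inl_b]; exact if_pos hrs2)]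
      · have hrs2 : ¬ r q2 s := fun h2 => hrs (hequiv.trans hr h2)
        rw [gevalFrom_cons_none _ (by rw [cstep_inl_b]; exact if_neg hrs),
            gevalFrom_cons_none _ (by rw [cstep_inl_b]; exact if_neg hrs2)]

end CongruenceGadgetAux

/-- The congruence gadget: for every congruence `≃` on a total DFA `M`, there is a
(partial) DFA `N` extending `M` with new states `τ` and new letters `β` such that
(1) `L_M(q) = L_N(q) ∩ Σ*` and `δ⁻¹(q) = μ⁻¹(q)` for all `q ∈ Q`,
(2) `L_M(q₁) △ L_M(q₂) = L_N(q₁) △ L_N(q₂)` for all `q₁ ≃ q₂`,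
(3) every new state is hyper-inequivalent to every other state, and
(4) `q₁ ≄ q₂` implies that `q₁` and `q₂` are hyper-inequivalent in `N`. -/
theorem congruence_gadget {α σ : Type} [Fintype α] [Fintype σ] (M : DFA α σ)
    (r : σ → σ → Prop) (hequiv : Equivalence r)
    (hcong : ∀ (q1 q2 : σ) (a : α), r q1 q2 → r (M.step q1 a) (M.step q2 a)) :
    ∃ (β τ : Type) (_ : Fintype β) (_ : Fintype τ) (N : PDFA (α ⊕ β) (σ ⊕ τ)),
      N.start = Sum.inl M.start ∧
      (∀ (q : σ) (a : α), N.step (Sum.inl q) (Sum.inl a) = some (Sum.inl (M.step q a))) ∧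
      (∀ q : σ,
        N.rightLang (Sum.inl q) ∩ {w | ∀ x ∈ w, ∃ a : α, x = Sum.inl a}
          = List.map (Sum.inl : α → α ⊕ β) '' M.rightLang q ∧
        N.leftLang (Sum.inl q)
          = List.map (Sum.inl : α → α ⊕ β) '' {w : List α | M.eval w = q}) ∧
      (∀ q1 q2 : σ, r q1 q2 →
        symmDiff (N.rightLang (Sum.inl q1)) (N.rightLang (Sum.inl q2))
          = List.map (Sum.inl : α → α ⊕ β) ''
              symmDiff (M.rightLang q1) (M.rightLang q2)) ∧
      (∀ (t : τ) (p2 : σ ⊕ τ), Sum.inr t ≠ p2 →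
        (symmDiff (N.rightLang (Sum.inr t)) (N.rightLang p2)).Infinite) ∧
      (∀ q1 q2 : σ, ¬ r q1 q2 →
        (symmDiff (N.rightLang (Sum.inl q1)) (N.rightLang (Sum.inl q2))).Infinite) := by
  classical
  refine ⟨Option σ, Option σ, inferInstance, inferInstance, cgadget M r, rfl,
    fun q a => rfl, ?_, ?_, ?_, ?_⟩
  · -- (1) right- and left-languages of old states
    intro q
    constructor
    · ext w
      simp only [Set.mem_inter_iff, Set.mem_image, Set.mem_setOf_eq]
      constructor
      · rintro ⟨hw, hpure⟩
        obtain ⟨u, rfl⟩ := gpure_decomp _ hpure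
        exact ⟨u, (cinl_mem_accept M r).mp
          ((gmem_rightLang_iff _ (ceval_pure M r q u)).mp hw), rfl⟩
      · rintro ⟨u, hu, rfl⟩
        refine ⟨(gmem_rightLang_iff _ (ceval_pure M r q u)).mpr
          ((cinl_mem_accept M r).mpr hu), ?_⟩
        intro x hx
        obtain ⟨a, _, rfl⟩ := List.mem_map.mp hx
        exact ⟨a, rfl⟩
    · ext w
      simp only [PDFA.leftLang, PDFA.eval, Set.mem_setOf_eq, Set.mem_image]
      constructor
      · intro h
        obtain ⟨u, rfl, hu⟩ := ceval_inl_pure M r h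
        exact ⟨u, hu, rfl⟩
      · rintro ⟨u, hu, rfl⟩
        have hu' : M.evalFrom M.start u = q := hu
        rw [show (cgadget M r).start = Sum.inl M.start from rfl, ceval_pure, hu']
  · -- (2) symmetric differences of related states
    intro q1 q2 hr
    have hinj : Function.Injective (List.map (Sum.inl : α → α ⊕ Option σ)) :=
      List.map_injective_iff.mpr Sum.inl_injective
    ext w
    rcases Classical.em (∀ x ∈ w, ∃ a : α, x = (Sum.inl a : α ⊕ Option σ)) with hp | hp
    · obtain ⟨u, rfl⟩ := gpure_decomp _ hp
      have h1 : u.map Sum.inl ∈ (cgadget M r).rightLang (Sum.inl q1) ↔ u ∈ M.rightLang q1 :=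
        (gmem_rightLang_iff _ (ceval_pure M r q1 u)).trans (cinl_mem_accept M r)
      have h2 : u.map Sum.inl ∈ (cgadget M r).rightLang (Sum.inl q2) ↔ u ∈ M.rightLang q2 :=
        (gmem_rightLang_iff _ (ceval_pure M r q2 u)).trans (cinl_mem_accept M r)
      simp only [Set.mem_symmDiff, h1, h2, Set.mem_image]
      constructor
      · intro h
        exact ⟨u, Set.mem_symmDiff.mpr h, rfl⟩
      · rintro ⟨u', hu', he⟩
        obtain rfl := hinj he
        exact Set.mem_symmDiff.mp hu'
    · have he := cevalFrom_rel M r hequiv hcong w q1 q2 hr hp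
      simp only [Set.mem_symmDiff, Set.mem_image]
      constructor
      · rintro (⟨h1, h2⟩ | ⟨h1, h2⟩)
        · refine absurd ?_ h2
          obtain ⟨p, hp', hev⟩ := h1
          rw [he] at hev
          exact ⟨p, hp', hev⟩
        · refine absurd ?_ h2
          obtain ⟨p, hp', hev⟩ := h1
          rw [← he] at hev
          exact ⟨p, hp', hev⟩
      · rintro ⟨u, _, rfl⟩
        refine absurd (fun x hx => ?_) hp
        obtain ⟨a, _, rfl⟩ := List.mem_map.mp hx
        exact ⟨a, rfl⟩
  · -- (3) new states are hyper-inequivalent to everything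
    rintro (_ | s) p2 hne
    · rcases p2 with q | (_ | s)
      · apply Set.infinite_of_injective_forall_mem
          (f := fun m : ℕ => List.replicate (m + 1) (Sum.inr none : α ⊕ Option σ))
        · intro m n h
          simpa using congrArg List.length h
        · intro m
          rw [Set.mem_symmDiff]
          left
          refine ⟨(gmem_rightLang_iff _ (ceval_cnone M r (m + 1))).mpr
            (cinr_none_mem_accept M r), ?_⟩
          apply gnot_mem_rightLang
          rw [List.replicate_succ]
          exact gevalFrom_cons_none _ rfl _
      · exact absurd rfl hne
      · apply Set.infinite_of_injective_forall_mem
          (f := fun m : ℕ => List.replicate m (Sum.inr none : α ⊕ Option σ))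
        · intro m n h
          simpa using congrArg List.length h
        · intro m
          rw [Set.mem_symmDiff]
          left
          refine ⟨(gmem_rightLang_iff _ (ceval_cnone M r m)).mpr
            (cinr_none_mem_accept M r), fun hmem => cinr_some_not_mem_accept M r s
            ((gmem_rightLang_iff _ (ceval_csome M r s m)).mp hmem)⟩
    · rcases p2 with q | (_ | s')
      · apply Set.infinite_of_injective_forall_mem
          (f := fun m : ℕ => List.replicate (m + 1) (Sum.inr none : α ⊕ Option σ)
            ++ [Sum.inr (some s)])
        · intro m n h
          simpa using congrArg List.length h
        · intro m
          rw [Set.mem_symmDiff]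
          left
          constructor
          · have h2 := gevalFrom_append_some _ (ceval_csome M r s (m + 1))
              [(Sum.inr (some s) : α ⊕ Option σ)]
            have h3 : (cgadget M r).evalFrom (Sum.inr (some s)) [Sum.inr (some s)]
                = some (Sum.inr none) := by
              rw [gevalFrom_cons_some _ (by rw [cstep_t_b]; exact if_pos rfl)]
              rfl
            exact (gmem_rightLang_iff _ (h2.trans h3)).mpr (cinr_none_mem_accept M r)
          · apply gnot_mem_rightLang
            rw [List.replicate_succ, List.cons_append]
            exact gevalFrom_cons_none _ rfl _
      · apply Set.infinite_of_injective_forall_mem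
          (f := fun m : ℕ => List.replicate m (Sum.inr none : α ⊕ Option σ))
        · intro m n h
          simpa using congrArg List.length h
        · intro m
          rw [Set.mem_symmDiff]
          right
          refine ⟨(gmem_rightLang_iff _ (ceval_cnone M r m)).mpr
            (cinr_none_mem_accept M r), fun hmem => cinr_some_not_mem_accept M r s
            ((gmem_rightLang_iff _ (ceval_csome M r s m)).mp hmem)⟩
      · have hss : s ≠ s' := fun h => hne (by rw [h])
        apply Set.infinite_of_injective_forall_mem
          (f := fun m : ℕ => List.replicate m (Sum.inr none : α ⊕ Option σ)
            ++ [Sum.inr (some s)])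
        · intro m n h
          simpa using congrArg List.length h
        · intro m
          rw [Set.mem_symmDiff]
          left
          constructor
          · have h2 := gevalFrom_append_some _ (ceval_csome M r s m)
              [(Sum.inr (some s) : α ⊕ Option σ)]
            have h3 : (cgadget M r).evalFrom (Sum.inr (some s)) [Sum.inr (some s)]
                = some (Sum.inr none) := by
              rw [gevalFrom_cons_some _ (by rw [cstep_t_b]; exact if_pos rfl)]
              rfl
            exact (gmem_rightLang_iff _ (h2.trans h3)).mpr (cinr_none_mem_accept M r)
          · apply gnot_mem_rightLang
            refine (gevalFrom_append_some _ (ceval_csome M r s' m) _).trans ?_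
            exact gevalFrom_cons_none _ (by rw [cstep_t_b]; exact if_neg hss) _
  · -- (4) unrelated old states are hyper-inequivalent
    intro q1 q2 hnr
    have h21 : ¬ r q2 q1 := fun h => hnr (hequiv.symm h)
    apply Set.infinite_of_injective_forall_mem
      (f := fun m : ℕ => (Sum.inr (some q1) : α ⊕ Option σ)
        :: List.replicate m (Sum.inr none))
    · intro m n h
      simpa using congrArg List.length h
    · intro m
      rw [Set.mem_symmDiff]
      left
      constructor
      · have h1 : (cgadget M r).evalFrom (Sum.inl q1)
            (Sum.inr (some q1) :: List.replicate m (Sum.inr none)) = some (Sum.inr none) := by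
          rw [gevalFrom_cons_some _ (by rw [cstep_inl_b]; exact if_pos (hequiv.refl q1))]
          exact ceval_cnone M r m
        exact (gmem_rightLang_iff _ h1).mpr (cinr_none_mem_accept M r)
      · apply gnot_mem_rightLang
        exact gevalFrom_cons_none _ (by rw [cstep_inl_b]; exact if_neg h21) _
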